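/- For 1/2 < α < 1, the piecewise function f_∞(x) defined as 1/x for x ≥ 1/(2α−1) and as (1/2)(α(2−x)+√(α²(2−x)²+4(1−α))) for 1 ≤ x ≤ 1/(2α−1) is continuous on [1,∞), but its derivative is discontinuous at x* = 1/(2α−1): the left derivative at x* does not equal the right derivative −(2α−1)². -/

import Mathlib

/-- for 1/2 < α < 1, the piecewise f_∞ (equal to 1/x for x ≥ x* = 1/(2α−1)
and to f_α^{(2)}(x) for 1 ≤ x ≤ x*) is continuous on [1,∞); its right derivative at x*
is −(2α−1)², but no left derivative at x* equals −(2α−1)². -/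
theorem stmt18 (α : ℝ) (hα : 1/2 < α) (hα1 : α < 1) :
    ContinuousOn
      (fun x : ℝ => if 1/(2*α-1) ≤ x then 1/x
        else (α*(2-x) + Real.sqrt (α^2*(2-x)^2 + 4*(1-α)))/2) (Set.Ici 1) ∧
    HasDerivWithinAt
      (fun x : ℝ => if 1/(2*α-1) ≤ x then 1/x
        else (α*(2-x) + Real.sqrt (α^2*(2-x)^2 + 4*(1-α)))/2)
      (-(2*α-1)^2) (Set.Ici (1/(2*α-1))) (1/(2*α-1)) ∧
    (∀ dL : ℝ, HasDerivWithinAt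
      (fun x : ℝ => if 1/(2*α-1) ≤ x then 1/x
        else (α*(2-x) + Real.sqrt (α^2*(2-x)^2 + 4*(1-α)))/2)
      dL (Set.Iic (1/(2*α-1))) (1/(2*α-1)) → dL ≠ -(2*α-1)^2) := by
  have ht : (0:ℝ) < 2*α - 1 := by linarith
  set c : ℝ := 1/(2*α-1) with hc
  have hcpos : 0 < c := by positivity
  -- key algebraic facts
  have hqpos : (0:ℝ) < 4*α^2 - 5*α + 2 := by nlinarith [sq_nonneg (2*α-1)]
  set q : ℝ := (4*α^2 - 5*α + 2)/(2*α-1) with hqdef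
  have hq : 0 < q := div_pos hqpos ht
  have husq : α^2*(2-c)^2 + 4*(1-α) = q^2 := by
    have : α*2-1 ≠ 0 := by linarith
    rw [hqdef, hc]; field_simp; ring
  have hsq : Real.sqrt (α^2*(2-c)^2 + 4*(1-α)) = q := by
    rw [husq, Real.sqrt_sq hq.le]
  have hgc : (α*(2-c) + Real.sqrt (α^2*(2-c)^2 + 4*(1-α)))/2 = 1/c := by
    have : α*2-1 ≠ 0 := by linarith
    rw [hsq, hqdef, hc]; field_simp; ring
  set g : ℝ → ℝ := fun x => (α*(2-x) + Real.sqrt (α^2*(2-x)^2 + 4*(1-α)))/2 with hg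
  set f : ℝ → ℝ := fun x : ℝ => if c ≤ x then 1/x else g x with hf
  -- continuity
  have hcont : ContinuousOn f (Set.Ici 1) := by
    apply ContinuousOn.if
    · intro a ha
      have ha2 : a = c := by
        have h := ha.2
        rw [show {a : ℝ | c ≤ a} = Set.Ici c from rfl, frontier_Ici] at h
        exact h
      rw [ha2]
      exact hgc.symm
    · intro x hx
      have hx1 : (1:ℝ) ≤ x := by
        simpa using hx.1
      exact ((continuousOn_const.div continuousOn_id (fun y hy => by
        have : (1:ℝ) ≤ y := by simpa using hy.1
        simp; linarith)) x hx)
    · have : Continuous g := by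
        rw [hg]; fun_prop
      exact this.continuousOn
  refine ⟨hcont, ?_, ?_⟩
  · -- right derivative
    have h1 : HasDerivAt (fun x : ℝ => 1/x) (-(2*α-1)^2) c := by
      have := hasDerivAt_inv hcpos.ne'
      have he : -(c^2)⁻¹ = -(2*α-1)^2 := by rw [hc]; field_simp
      simpa [one_div, he] using this
    refine (h1.hasDerivWithinAt).congr (fun x hx => ?_) ?_
    · simp only [hf]; rw [if_pos (Set.mem_Ici.mp hx)]
    · simp only [hf]; rw [if_pos le_rfl]
  · -- left derivative
    have h1 : HasDerivAt (fun x : ℝ => 2 - x) (-1) c := by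
      simpa using (hasDerivAt_id c).const_sub 2
    have h2 := h1.pow 2
    have h3 := (h2.const_mul (α^2)).add_const (4*(1-α))
    have hupos : 0 < α^2*(2-c)^2 + 4*(1-α) := by nlinarith [sq_nonneg (α*(2-c))]
    have h5 := h3.sqrt hupos.ne'
    have h6 : HasDerivAt (fun x : ℝ => α*(2-x)) (α * (-1)) c := h1.const_mul α
    have h7 := (h6.add h5).div_const 2
    set dG : ℝ := (α * (-1) + α ^ 2 * (↑2 * (2 - c) ^ (2 - 1) * -1) / (2 * Real.sqrt (α ^ 2 * (2 - c) ^ 2 + 4 * (1 - α)))) / 2 with hdG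
    have hL : HasDerivWithinAt f dG (Set.Iic c) c := by
      refine (h7.hasDerivWithinAt).congr (fun x hx => ?_) ?_
      · by_cases hxc : c ≤ x
        · have : x = c := le_antisymm hx hxc
          subst this
          simp only [hf]; rw [if_pos le_rfl]; exact hgc.symm
        · simp only [hf]; rw [if_neg hxc]; rfl
      · simp only [hf]; rw [if_pos le_rfl]; exact hgc.symm
    intro dL hdL
    have hud : UniqueDiffWithinAt ℝ (Set.Iic c) c := uniqueDiffOn_Iic c c Set.self_mem_Iic
    have hdLeq : dL = dG := by
      rw [← hdL.derivWithin hud, ← hL.derivWithin hud]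
    rw [hdLeq, hdG]
    rw [hsq]
    intro heq
    rw [hc, hqdef] at heq
    have h2a : (2*α-1) ≠ 0 := ht.ne'
    have hq2 : (4*α^2 - 5*α + 2) ≠ 0 := hqpos.ne'
    norm_num at heq
    field_simp [show α*2-1 ≠ 0 by linarith, show α*(α*4-5)+2 ≠ 0 by nlinarith] at heq
    have hkey : 0 < (2*α-1)^4*(1-α) := mul_pos (pow_pos ht 4) (by linarith)
    have hz : (2*α-1)^4*(1-α) = 0 := by linear_combination (-(2*α-1)/4) * heq
    exact absurd hz hkey.ne'
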